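/- arXiv:1611.04613 — 2 statements merged into one kernel-verified Lean document; each statement's English description precedes it below -/
import Mathlib

section
/- Let v̄_p > 0 and let p3 ≠ 0 be a real constant. Suppose u1, x2, x3, p2 : ℝ → ℝ are differentiable on an interval I, with x2(t) > 0 and cos u1(t) ≠ 0 for all t ∈ I, satisfying on I the state equation deriv x3 = (v̄_p / x2) · cos u1, the derived control equation deriv u1 = v̄_p (p2/p3) · sin u1 · (cos u1)² − (v̄_p / x2) · (cos u1)³, and the first-order optimality condition tan u1 = −(p2/p3) · x2. Then u1 + x3 is constant on I. -/
/-- Along an optimal trajectory in the inactive-constraint regime (state equation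
`ẋ3 = (v̄_p / x2) cos u1`, control equation
`u̇1 = v̄_p (p2/p3) sin u1 cos² u1 − (v̄_p / x2) cos³ u1`, and first-order optimality
condition `tan u1 = −(p2/p3) x2`), the quantity `u1 + x3` is constant. -/
theorem heading_plus_polar_angle_constant
    (vp p3 : ℝ) (hvp : 0 < vp) (hp3 : p3 ≠ 0)
    (u1 x2 x3 p2 : ℝ → ℝ) (I : Set ℝ) (hI : Convex ℝ I)
    (hx2pos : ∀ t ∈ I, x2 t > 0)
    (hcos : ∀ t ∈ I, Real.cos (u1 t) ≠ 0)
    (hp2 : ∀ t ∈ I, DifferentiableAt ℝ p2 t)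
    (hx3 : ∀ t ∈ I, HasDerivAt x3 ((vp / x2 t) * Real.cos (u1 t)) t)
    (hx2 : ∀ t ∈ I, DifferentiableAt ℝ x2 t)
    (hu1 : ∀ t ∈ I, HasDerivAt u1
      (vp * (p2 t / p3) * Real.sin (u1 t) * (Real.cos (u1 t)) ^ 2
        - (vp / x2 t) * (Real.cos (u1 t)) ^ 3) t)
    (hopt : ∀ t ∈ I, Real.tan (u1 t) = -(p2 t / p3) * x2 t) :
    ∃ k : ℝ, ∀ t ∈ I, u1 t + x3 t = k := by
  rcases I.eq_empty_or_nonempty with h | ⟨t0, ht0⟩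
  · exact ⟨0, fun t ht => absurd ht (h ▸ Set.notMem_empty t)⟩
  refine ⟨u1 t0 + x3 t0, fun t ht => ?_⟩
  have key : ∀ s ∈ I, HasDerivWithinAt (fun r => u1 r + x3 r) 0 I s := by
    intro s hs
    have hx2ne : x2 s ≠ 0 := ne_of_gt (hx2pos s hs)
    have hcs := hcos s hs
    have htan := hopt s hs
    rw [Real.tan_eq_sin_div_cos] at htan
    have hsin : Real.sin (u1 s) = -(p2 s / p3) * x2 s * Real.cos (u1 s) :=
      (div_eq_iff hcs).mp htan
    have hd := (hu1 s hs).add (hx3 s hs)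
    have heq : vp * (p2 s / p3) * Real.sin (u1 s) * Real.cos (u1 s) ^ 2
        - vp / x2 s * Real.cos (u1 s) ^ 3 + vp / x2 s * Real.cos (u1 s) = 0 := by
      have hpyth := Real.sin_sq_add_cos_sq (u1 s)
      rw [hsin] at hpyth
      rw [hsin]
      field_simp at hpyth ⊢
      linear_combination (-(vp * Real.cos (u1 s))) * hpyth
    rw [heq] at hd
    exact hd.hasDerivWithinAt
  have h0 := hI.norm_image_sub_le_of_norm_hasDerivWithin_le
    (f := fun r => u1 r + x3 r) (f' := fun _ => (0 : ℝ)) (C := 0)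
    (fun s hs => key s hs) (fun s _ => by simp) ht0 ht
  have : u1 t + x3 t - (u1 t0 + x3 t0) = 0 := by simpa using h0
  linarith
end

section
/- Let v̄_p > 0 and let p3 ≠ 0 be a real constant. Suppose u1, x2, x3, p2 : ℝ → ℝ are differentiable on an interval I containing t0, with x2(t) > 0 and cos u1(t) ≠ 0 on I, satisfying on I the equations deriv x2 = −v̄_p · sin u1, deriv x3 = (v̄_p / x2) · cos u1, deriv u1 = v̄_p (p2/p3) · sin u1 · (cos u1)² − (v̄_p / x2) · (cos u1)³, and tan u1 = −(p2/p3) · x2. Set c = u1(t0) + x3(t0) and p(t) = (x2(t) · cos x3(t), x2(t) · sin x3(t)) ∈ ℝ². Then for every t ∈ I, (p(t) − p(t0)) · (cos c, sin c) = 0; that is, the pursuer's optimal trajectory in the inactive-constraint regime is a straight line through p(t0) with slope −cot c. -/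
/-- In the inactive-constraint regime, the pursuer's Cartesian trajectory
`p t = (x2 t cos (x3 t), x2 t sin (x3 t))` is a straight line through `p t0`
orthogonal to `(cos c, sin c)`, where `c = u1 t0 + x3 t0`. -/
theorem optimal_trajectory_is_straight_line
    (vp p3 : ℝ) (hvp : 0 < vp) (hp3 : p3 ≠ 0)
    (u1 x2 x3 p2 : ℝ → ℝ) (I : Set ℝ) (hI : Convex ℝ I) (t0 : ℝ) (ht0 : t0 ∈ I)
    (hx2pos : ∀ t ∈ I, x2 t > 0)
    (hcos : ∀ t ∈ I, Real.cos (u1 t) ≠ 0)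
    (hp2 : ∀ t ∈ I, DifferentiableAt ℝ p2 t)
    (hx2 : ∀ t ∈ I, HasDerivAt x2 (-vp * Real.sin (u1 t)) t)
    (hx3 : ∀ t ∈ I, HasDerivAt x3 ((vp / x2 t) * Real.cos (u1 t)) t)
    (hu1 : ∀ t ∈ I, HasDerivAt u1
      (vp * (p2 t / p3) * Real.sin (u1 t) * (Real.cos (u1 t)) ^ 2
        - (vp / x2 t) * (Real.cos (u1 t)) ^ 3) t)
    (hopt : ∀ t ∈ I, Real.tan (u1 t) = -(p2 t / p3) * x2 t) :
    ∀ t ∈ I,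
      (x2 t * Real.cos (x3 t) - x2 t0 * Real.cos (x3 t0)) * Real.cos (u1 t0 + x3 t0)
        + (x2 t * Real.sin (x3 t) - x2 t0 * Real.sin (x3 t0)) * Real.sin (u1 t0 + x3 t0)
        = 0 := by
  set c : ℝ := u1 t0 + x3 t0 with hc
  -- u1' simplifies to -(vp / x2) * cos u1 using the optimality condition
  have hu1' : ∀ t ∈ I, HasDerivAt u1 (-((vp / x2 t) * Real.cos (u1 t))) t := by
    intro t ht
    have h := hu1 t ht
    have hx2ne : x2 t ≠ 0 := (hx2pos t ht).ne'
    have hcne := hcos t ht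
    have hpd : p2 t / p3 = -Real.sin (u1 t) / (Real.cos (u1 t) * x2 t) := by
      have := hopt t ht
      rw [Real.tan_eq_sin_div_cos] at this
      field_simp at this ⊢
      linarith
    have hkey : vp * (p2 t / p3) * Real.sin (u1 t) * (Real.cos (u1 t)) ^ 2
        - (vp / x2 t) * (Real.cos (u1 t)) ^ 3 = -((vp / x2 t) * Real.cos (u1 t)) := by
      rw [hpd]
      have hsc : Real.sin (u1 t) ^ 2 + Real.cos (u1 t) ^ 2 = 1 := Real.sin_sq_add_cos_sq _
      field_simp
      linear_combination (-1 : ℝ) * hsc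
    rwa [hkey] at h
  -- u1 + x3 has zero derivative, hence is constant on I
  have hsum : ∀ t ∈ I, u1 t + x3 t = c := by
    intro t ht
    have hderiv : ∀ s ∈ I, HasDerivWithinAt (fun r => u1 r + x3 r) 0 I s := by
      intro s hs
      have := ((hu1' s hs).add (hx3 s hs)).hasDerivWithinAt (s := I)
      have h2 : HasDerivWithinAt (u1 + x3) 0 I s := by simpa using this
      exact h2
    have := hI.norm_image_sub_le_of_norm_hasDerivWithin_le (C := 0) hderiv
      (fun s _ => by simp) ht0 ht
    simp only [zero_mul, norm_le_zero_iff, sub_eq_zero] at this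
    exact this
  intro t ht
  -- f(s) = x2 s * cos (x3 s - c) is constant on I
  have hf : ∀ s ∈ I, HasDerivWithinAt (fun r => x2 r * Real.cos (x3 r - c)) 0 I s := by
    intro s hs
    have hd : HasDerivAt (fun r => x2 r * Real.cos (x3 r - c))
        ((-vp * Real.sin (u1 s)) * Real.cos (x3 s - c)
          + x2 s * (-Real.sin (x3 s - c) * ((vp / x2 s) * Real.cos (u1 s)))) s := by
      exact (hx2 s hs).mul (((hx3 s hs).sub_const c).cos)
    have hx2ne : x2 s ≠ 0 := (hx2pos s hs).ne'
    have heq : x3 s - c = -(u1 s) := by have := hsum s hs; linarith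
    have : (-vp * Real.sin (u1 s)) * Real.cos (x3 s - c)
          + x2 s * (-Real.sin (x3 s - c) * ((vp / x2 s) * Real.cos (u1 s))) = 0 := by
      rw [heq, Real.cos_neg, Real.sin_neg]
      field_simp
      ring
    rw [this] at hd
    exact hd.hasDerivWithinAt
  have hconst := hI.norm_image_sub_le_of_norm_hasDerivWithin_le (C := 0) hf
    (fun s _ => by simp) ht0 ht
  simp only [zero_mul, norm_le_zero_iff, sub_eq_zero] at hconst
  have h1 : x2 t * Real.cos (x3 t - c) = x2 t0 * Real.cos (x3 t0 - c) := hconst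
  rw [Real.cos_sub, Real.cos_sub] at h1
  linear_combination h1
end
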